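/- Let S be uniform on ℤ/qℤ, and let p_{XV|S} be a channel with auxiliary variable V ∈ {0,...,L−1}. Let p_{XU|S} be its shift-enlarged version as above, with U ∈ {0,...,qL−1}. Let p_{Y|X} be a cyclic channel on ℤ/qℤ, i.e., p_{Y|X}(y|x) = p_{Y|X}((y−x) mod q | 0). Form Y by passing X through p_{Y|X} in both systems (Markov chains (V,S)→X→Y and (U,S)→X→Y). Then I(Y;U) in the enlarged system is at least I(Y;V) in the original system. -/

import Mathlib

lemma mul_logb_mul' {c x : ℝ} (hc : 0 < c) (hx : 0 ≤ x) :
    x * Real.logb 2 (c * x) = x * Real.logb 2 c + x * Real.logb 2 x := by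
  rcases eq_or_lt_of_le hx with h | h
  · simp [← h]
  · rw [Real.logb_mul hc.ne' h.ne', mul_add]

/-- Shannon entropy (base 2) of a finitely supported distribution. -/
noncomputable def ent {α : Type*} [Fintype α] (p : α → ℝ) : ℝ :=
  -∑ a, p a * Real.logb 2 (p a)

lemma ent_comp_equiv {α β : Type*} [Fintype α] [Fintype β] (e : α ≃ β) (p : β → ℝ) :
    ent (fun a => p (e a)) = ent p := by
  unfold ent
  rw [← Equiv.sum_comp e (fun b => p b * Real.logb 2 (p b))]

lemma ent_smul_uniform (q : ℕ) [NeZero q] {γ : Type*} [Fintype γ] (F : γ → ℝ)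
    (h0 : ∀ t, 0 ≤ F t) (h1 : ∑ t, F t = 1) :
    ent (fun t : γ × ZMod q => (1 / (q:ℝ)) * F t.1) = Real.logb 2 q + ent F := by
  have hq : (0:ℝ) < q := by exact_mod_cast Nat.pos_of_ne_zero (NeZero.ne q)
  have hq' : (0:ℝ) < 1 / q := by positivity
  have hcard : (Fintype.card (ZMod q) : ℝ) = q := by rw [ZMod.card]
  unfold ent
  rw [Fintype.sum_prod_type]
  have : ∀ a : γ, ∑ _i : ZMod q, (1 / (q:ℝ)) * F a * Real.logb 2 ((1 / q) * F a)
      = F a * Real.logb 2 (1 / q) + F a * Real.logb 2 (F a) := by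
    intro a
    rw [Finset.sum_const, Finset.card_univ, nsmul_eq_mul, hcard,
      ← mul_logb_mul' hq' (h0 a)]
    field_simp
  simp only [this, Finset.sum_add_distrib, ← Finset.sum_mul, h1]
  rw [Real.logb_div one_ne_zero hq.ne']
  simp
  ring

lemma ent_uniform (q : ℕ) [NeZero q] :
    ent (fun _ : ZMod q => 1 / (q:ℝ)) = Real.logb 2 q := by
  have hq : (0:ℝ) < q := by exact_mod_cast Nat.pos_of_ne_zero (NeZero.ne q)
  have hcard : (Fintype.card (ZMod q) : ℝ) = q := by rw [ZMod.card]
  unfold ent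
  rw [Finset.sum_const, Finset.card_univ, nsmul_eq_mul, hcard,
    Real.logb_div one_ne_zero hq.ne']
  field_simp
  simp

lemma ent_le_logb_card {α : Type*} [Fintype α] (p : α → ℝ) (h0 : ∀ a, 0 ≤ p a)
    (h1 : ∑ a, p a = 1) : ent p ≤ Real.logb 2 (Fintype.card α) := by
  have hne : Nonempty α := by
    by_contra h
    rw [not_nonempty_iff] at h
    simp [Finset.univ_eq_empty] at h1
  set n : ℝ := (Fintype.card α : ℝ) with hn
  have hnpos : (0:ℝ) < n := by
    rw [hn]; exact_mod_cast Fintype.card_pos (α := α)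
  have hlog2 : (0:ℝ) < Real.log 2 := Real.log_pos (by norm_num)
  have key : ∀ a, -(p a * Real.logb 2 (n * p a)) ≤ (1 / Real.log 2) * (1 / n - p a) := by
    intro a
    rcases eq_or_lt_of_le (h0 a) with h | h
    · rw [← h]; simp; positivity
    · have hnp : 0 < n * p a := by positivity
      rw [Real.logb, show -(p a * (Real.log (n * p a) / Real.log 2))
        = -(p a * Real.log (n * p a)) / Real.log 2 by ring, div_le_iff₀ hlog2]
      have hlog : Real.log (1 / (n * p a)) ≤ 1 / (n * p a) - 1 :=
        Real.log_le_sub_one_of_pos (by positivity)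
      have : -(p a * Real.log (n * p a)) = p a * Real.log (1 / (n * p a)) := by
        rw [one_div, Real.log_inv]; ring
      rw [this]
      calc p a * Real.log (1 / (n * p a)) ≤ p a * (1 / (n * p a) - 1) := by
            exact mul_le_mul_of_nonneg_left hlog (h0 a)
        _ = 1 / n - p a := by field_simp
        _ = 1 / Real.log 2 * (1 / n - p a) * Real.log 2 := by field_simp
  have hsum : ent p - Real.logb 2 n = ∑ a, -(p a * Real.logb 2 (n * p a)) := by
    unfold ent
    have : ∀ a, p a * Real.logb 2 (n * p a)
        = p a * Real.logb 2 n + p a * Real.logb 2 (p a) :=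
      fun a => mul_logb_mul' hnpos (h0 a)
    simp only [this, Finset.sum_add_distrib, ← Finset.sum_mul, h1, Finset.sum_neg_distrib]
    ring
  have hle : ent p - Real.logb 2 n ≤ ∑ a : α, (1 / Real.log 2) * (1 / n - p a) := by
    rw [hsum]; exact Finset.sum_le_sum fun a _ => key a
  have hzero : ∑ a : α, (1 / Real.log 2) * (1 / n - p a) = 0 := by
    rw [← Finset.mul_sum, Finset.sum_sub_distrib, h1, Finset.sum_const,
      Finset.card_univ, nsmul_eq_mul, ← hn]
    field_simp
    ring
  linarith [hle, hzero]

/-- For a cyclic attack channel `p_{Y|X}` on `ℤ/qℤ`, the shift-enlarged auxiliary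
channel (with `U = qV + I`, encoded as the pair `(V, I) ∈ Fin L × ℤ/qℤ`) satisfies
`I(Y;U) ≥ I(Y;V)`. -/
theorem stmt_13 (q : ℕ) [NeZero q] (L : ℕ)
    (p : ZMod q → ZMod q → Fin L → ℝ) (hp : ∀ s x v, 0 ≤ p s x v)
    (hp1 : ∀ s, ∑ x, ∑ v, p s x v = 1)
    (W : ZMod q → ZMod q → ℝ) (hW : ∀ x y, 0 ≤ W x y)
    (hW1 : ∀ x, ∑ y, W x y = 1)
    (hWcyc : ∀ x y : ZMod q, W x y = W 0 (y - x)) :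
    ent (fun y : ZMod q => ∑ s : ZMod q, ∑ x : ZMod q, ∑ u : Fin L × ZMod q,
        (1 / (q : ℝ)) * ((1 / (q : ℝ)) * p (s - u.2) (x - u.2) u.1) * W x y) +
      ent (fun u : Fin L × ZMod q => ∑ s : ZMod q, ∑ x : ZMod q,
        (1 / (q : ℝ)) * ((1 / (q : ℝ)) * p (s - u.2) (x - u.2) u.1)) -
      ent (fun t : ZMod q × Fin L × ZMod q => ∑ s : ZMod q, ∑ x : ZMod q,
        (1 / (q : ℝ)) * ((1 / (q : ℝ)) * p (s - t.2.2) (x - t.2.2) t.2.1) * W x t.1)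
    ≥
    ent (fun y : ZMod q => ∑ s : ZMod q, ∑ x : ZMod q, ∑ v : Fin L,
        (1 / (q : ℝ)) * p s x v * W x y) +
      ent (fun v : Fin L => ∑ s : ZMod q, ∑ x : ZMod q, (1 / (q : ℝ)) * p s x v) -
      ent (fun t : ZMod q × Fin L => ∑ s : ZMod q, ∑ x : ZMod q,
        (1 / (q : ℝ)) * p s x t.2 * W x t.1) := by
  have hq : (0:ℝ) < q := by exact_mod_cast Nat.pos_of_ne_zero (NeZero.ne q)
  set f : ZMod q → Fin L → ℝ :=
    fun y v => ∑ s : ZMod q, ∑ x : ZMod q, (1 / (q:ℝ)) * p s x v * W x y with hf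
  set g : Fin L → ℝ := fun v => ∑ s : ZMod q, ∑ x : ZMod q, (1 / (q:ℝ)) * p s x v with hg
  set hY : ZMod q → ℝ := fun y => ∑ v : Fin L, f y v with hhY
  set fJ : ZMod q × Fin L → ℝ := fun w => f w.1 w.2 with hfJ
  -- nonnegativity
  have hfnn : ∀ y v, 0 ≤ f y v := by
    intro y v
    exact Finset.sum_nonneg fun s _ => Finset.sum_nonneg fun x _ =>
      mul_nonneg (mul_nonneg (by positivity) (hp s x v)) (hW x y)
  have hgnn : ∀ v, 0 ≤ g v := by
    intro v
    exact Finset.sum_nonneg fun s _ => Finset.sum_nonneg fun x _ =>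
      mul_nonneg (by positivity) (hp s x v)
  -- marginal of f over y is g
  have hmarg : ∀ v, ∑ y : ZMod q, f y v = g v := by
    intro v
    simp only [hf, hg]
    rw [Finset.sum_comm]
    refine Finset.sum_congr rfl fun s _ => ?_
    rw [Finset.sum_comm]
    refine Finset.sum_congr rfl fun x _ => ?_
    rw [← Finset.mul_sum, hW1, mul_one]
  -- total mass of g
  have hgsum : ∑ v : Fin L, g v = 1 := by
    simp only [hg]
    rw [Finset.sum_comm]
    have : ∀ s : ZMod q, ∑ v : Fin L, ∑ x : ZMod q, (1 / (q:ℝ)) * p s x v = 1 / q := by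
      intro s
      rw [Finset.sum_comm]
      have : ∀ x : ZMod q, ∑ v : Fin L, (1 / (q:ℝ)) * p s x v
          = (1 / (q:ℝ)) * ∑ v, p s x v := by
        intro x; rw [Finset.mul_sum]
      simp only [this, ← Finset.mul_sum, hp1, mul_one]
    simp only [this, Finset.sum_const, Finset.card_univ, ZMod.card, nsmul_eq_mul]
    field_simp
  have hfJsum : ∑ w : ZMod q × Fin L, fJ w = 1 := by
    rw [Fintype.sum_prod_type]
    simp only [hfJ]
    rw [Finset.sum_comm]
    simp only [hmarg]
    exact hgsum
  have hYsum : ∑ y : ZMod q, hY y = 1 := by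
    simp only [hhY]
    rw [Finset.sum_comm]
    simp only [hmarg]
    exact hgsum
  have hYnn : ∀ y, 0 ≤ hY y := fun y => Finset.sum_nonneg fun v _ => hfnn y v
  -- key reindexing identity (joint with Y)
  have key : ∀ (y : ZMod q) (v : Fin L) (i : ZMod q),
      ∑ s : ZMod q, ∑ x : ZMod q,
        (1 / (q:ℝ)) * ((1 / (q:ℝ)) * p (s - i) (x - i) v) * W x y
      = (1 / (q:ℝ)) * f (y - i) v := by
    intro y v i
    have step1 : ∑ s : ZMod q, ∑ x : ZMod q,
        (1 / (q:ℝ)) * ((1 / (q:ℝ)) * p (s - i) (x - i) v) * W x y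
        = ∑ s : ZMod q, ∑ x : ZMod q,
        (1 / (q:ℝ)) * ((1 / (q:ℝ)) * p s x v) * W (x + i) y := by
      refine Fintype.sum_equiv (Equiv.subRight i) _ _ fun s => ?_
      refine Fintype.sum_equiv (Equiv.subRight i) _ _ fun x => ?_
      simp [Equiv.subRight, sub_add_cancel]
    rw [step1]
    have step2 : ∀ x : ZMod q, W (x + i) y = W x (y - i) := by
      intro x
      rw [hWcyc (x + i) y, hWcyc x (y - i)]
      ring_nf
    simp only [step2]
    simp only [hf, Finset.mul_sum]
    refine Finset.sum_congr rfl fun s _ => Finset.sum_congr rfl fun x _ => ?_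
    ring
  -- reindexing for the U marginal
  have keyU : ∀ (v : Fin L) (i : ZMod q),
      ∑ s : ZMod q, ∑ x : ZMod q, (1 / (q:ℝ)) * ((1 / (q:ℝ)) * p (s - i) (x - i) v)
      = (1 / (q:ℝ)) * g v := by
    intro v i
    have step1 : ∑ s : ZMod q, ∑ x : ZMod q,
        (1 / (q:ℝ)) * ((1 / (q:ℝ)) * p (s - i) (x - i) v)
        = ∑ s : ZMod q, ∑ x : ZMod q, (1 / (q:ℝ)) * ((1 / (q:ℝ)) * p s x v) := by
      refine Fintype.sum_equiv (Equiv.subRight i) _ _ fun s => ?_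
      refine Fintype.sum_equiv (Equiv.subRight i) _ _ fun x => ?_
      simp [Equiv.subRight]
    rw [step1]
    simp only [hg, Finset.mul_sum]
  -- identify the three "new" entropy arguments
  have eqY : (fun y : ZMod q => ∑ s : ZMod q, ∑ x : ZMod q, ∑ u : Fin L × ZMod q,
      (1 / (q : ℝ)) * ((1 / (q : ℝ)) * p (s - u.2) (x - u.2) u.1) * W x y)
      = fun _ : ZMod q => 1 / (q:ℝ) := by
    funext y
    have swap : ∑ s : ZMod q, ∑ x : ZMod q, ∑ u : Fin L × ZMod q,
        (1 / (q : ℝ)) * ((1 / (q : ℝ)) * p (s - u.2) (x - u.2) u.1) * W x y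
        = ∑ u : Fin L × ZMod q, ∑ s : ZMod q, ∑ x : ZMod q,
        (1 / (q : ℝ)) * ((1 / (q : ℝ)) * p (s - u.2) (x - u.2) u.1) * W x y := by
      calc ∑ s : ZMod q, ∑ x : ZMod q, ∑ u : Fin L × ZMod q,
            (1 / (q : ℝ)) * ((1 / (q : ℝ)) * p (s - u.2) (x - u.2) u.1) * W x y
          = ∑ s : ZMod q, ∑ u : Fin L × ZMod q, ∑ x : ZMod q,
            (1 / (q : ℝ)) * ((1 / (q : ℝ)) * p (s - u.2) (x - u.2) u.1) * W x y :=
            Finset.sum_congr rfl fun s _ => Finset.sum_comm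
        _ = ∑ u : Fin L × ZMod q, ∑ s : ZMod q, ∑ x : ZMod q,
            (1 / (q : ℝ)) * ((1 / (q : ℝ)) * p (s - u.2) (x - u.2) u.1) * W x y :=
            Finset.sum_comm
    rw [swap]
    have : ∀ u : Fin L × ZMod q, ∑ s : ZMod q, ∑ x : ZMod q,
        (1 / (q : ℝ)) * ((1 / (q : ℝ)) * p (s - u.2) (x - u.2) u.1) * W x y
        = (1 / (q:ℝ)) * f (y - u.2) u.1 := fun u => key y u.1 u.2
    simp only [this]
    rw [Fintype.sum_prod_type]
    have : ∑ v : Fin L, ∑ i : ZMod q, (1 / (q:ℝ)) * f (y - i) v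
        = (1 / (q:ℝ)) * ∑ i : ZMod q, hY (y - i) := by
      rw [Finset.sum_comm, Finset.mul_sum]
      exact Finset.sum_congr rfl fun i _ => (Finset.mul_sum _ _ _).symm
    rw [this]
    have : ∑ i : ZMod q, hY (y - i) = ∑ y' : ZMod q, hY y' :=
      Equiv.sum_comp (Equiv.subLeft y) hY
    rw [this, hYsum, mul_one]
  have eqU : (fun u : Fin L × ZMod q => ∑ s : ZMod q, ∑ x : ZMod q,
      (1 / (q : ℝ)) * ((1 / (q : ℝ)) * p (s - u.2) (x - u.2) u.1))
      = fun u : Fin L × ZMod q => (1 / (q:ℝ)) * g u.1 := by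
    funext u; exact keyU u.1 u.2
  have eqT : (fun t : ZMod q × Fin L × ZMod q => ∑ s : ZMod q, ∑ x : ZMod q,
      (1 / (q : ℝ)) * ((1 / (q : ℝ)) * p (s - t.2.2) (x - t.2.2) t.2.1) * W x t.1)
      = fun t : ZMod q × Fin L × ZMod q => (1 / (q:ℝ)) * fJ (t.1 - t.2.2, t.2.1) := by
    funext t; exact key t.1 t.2.1 t.2.2
  -- equivalence for the triple joint
  let e : (ZMod q × Fin L × ZMod q) ≃ ((ZMod q × Fin L) × ZMod q) :=
    { toFun := fun t => ((t.1 - t.2.2, t.2.1), t.2.2)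
      invFun := fun w => (w.1.1 + w.2, w.1.2, w.2)
      left_inv := by intro t; simp
      right_inv := by intro w; simp }
  have entT : ent (fun t : ZMod q × Fin L × ZMod q =>
      (1 / (q:ℝ)) * fJ (t.1 - t.2.2, t.2.1)) = Real.logb 2 q + ent fJ := by
    have h1 : (fun t : ZMod q × Fin L × ZMod q => (1 / (q:ℝ)) * fJ (t.1 - t.2.2, t.2.1))
        = fun t => (fun w : (ZMod q × Fin L) × ZMod q => (1 / (q:ℝ)) * fJ w.1) (e t) := rfl
    rw [h1]
    exact (ent_comp_equiv e (fun w => (1 / (q:ℝ)) * fJ w.1)).trans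
      (ent_smul_uniform q fJ (fun w => hfnn w.1 w.2) hfJsum)
  have entU : ent (fun u : Fin L × ZMod q => (1 / (q:ℝ)) * g u.1)
      = Real.logb 2 q + ent g :=
    ent_smul_uniform q g hgnn hgsum
  -- identify the "old" entropy arguments
  have eqYold : (fun y : ZMod q => ∑ s : ZMod q, ∑ x : ZMod q, ∑ v : Fin L,
      (1 / (q : ℝ)) * p s x v * W x y) = hY := by
    funext y
    show _ = ∑ v : Fin L, ∑ s : ZMod q, ∑ x : ZMod q, (1 / (q:ℝ)) * p s x v * W x y
    calc ∑ s : ZMod q, ∑ x : ZMod q, ∑ v : Fin L, (1 / (q:ℝ)) * p s x v * W x y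
        = ∑ s : ZMod q, ∑ v : Fin L, ∑ x : ZMod q, (1 / (q:ℝ)) * p s x v * W x y :=
          Finset.sum_congr rfl fun s _ => by rw [Finset.sum_comm]
      _ = ∑ v : Fin L, ∑ s : ZMod q, ∑ x : ZMod q, (1 / (q:ℝ)) * p s x v * W x y := by
          rw [Finset.sum_comm]
  rw [eqY, eqU, eqT, eqYold, entT, entU, ent_uniform q]
  have hmax : ent hY ≤ Real.logb 2 q := by
    have := ent_le_logb_card hY hYnn hYsum
    rwa [ZMod.card] at this
  linarith
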